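/- Let γ : ℝ^d → ℝ be continuous and positively homogeneous of degree 1, i.e. γ(tξ) = t·γ(ξ) for all t ≥ 0 and ξ ∈ ℝ^d. Suppose that for all a₁, a₂ > 0 the function ξ ↦ (1 − e^{−a₁γ(ξ)})(1 − e^{−a₂γ(ξ)}) is a variogram on ℝ^d. Then there exists a real positive semidefinite d × d matrix A such that γ(ξ) = |Aξ| for all ξ ∈ ℝ^d. -/

import Mathlib

open scoped BigOperators

/-- A variogram on `ℝ^d`: nonnegative at the origin, even, and conditionally negative
definite (for complex weights summing to zero, the quadratic form is real and `≤ 0`). -/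
def IsVariogram {d : ℕ} (γ : EuclideanSpace ℝ (Fin d) → ℝ) : Prop :=
  0 ≤ γ 0 ∧ (∀ ξ, γ (-ξ) = γ ξ) ∧
    ∀ (n : ℕ) (ξ : Fin n → EuclideanSpace ℝ (Fin d)) (a : Fin n → ℂ),
      (∑ i, a i) = 0 →
      (∑ i, ∑ j, a i * (γ (ξ i - ξ j) : ℂ) * (starRingEnd ℂ) (a j)).im = 0 ∧
      (∑ i, ∑ j, a i * (γ (ξ i - ξ j) : ℂ) * (starRingEnd ℂ) (a j)).re ≤ 0

lemma realCND {d : ℕ} {f : EuclideanSpace ℝ (Fin d) → ℝ} (hf : IsVariogram f)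
    (n : ℕ) (p : Fin n → EuclideanSpace ℝ (Fin d)) (r : Fin n → ℝ)
    (hr : (∑ i, r i) = 0) :
    (∑ i, ∑ j, r i * f (p i - p j) * r j) ≤ 0 := by
  have h := (hf.2.2 n p (fun i => (r i : ℂ)) (by exact_mod_cast congrArg (Complex.ofReal) hr)).2
  have : (∑ i, ∑ j, ((r i : ℂ)) * (f (p i - p j) : ℂ) * (starRingEnd ℂ) ((r j : ℂ)))
      = ((∑ i, ∑ j, r i * f (p i - p j) * r j : ℝ) : ℂ) := by
    push_cast [Complex.conj_ofReal]
    ring_nf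
  rw [this] at h
  simpa using h

lemma exp_sub_one_ge (s : ℝ) (hs : 0 ≤ s) : s^2/4 ≤ Real.exp s - 1 := by
  have h1 := Real.add_one_le_exp (s/2)
  have h2 : Real.exp s = Real.exp (s/2) * Real.exp (s/2) := by
    rw [← Real.exp_add]; ring_nf
  nlinarith [Real.exp_pos (s/2)]

lemma lim1 (t : ℝ) :
    Filter.Tendsto (fun a : ℝ => (1 - Real.exp (-a * t))^2 / a^2)
      (nhdsWithin 0 (Set.Ioi 0)) (nhds (t^2)) := by
  have hd : HasDerivAt (fun a : ℝ => 1 - Real.exp (-a * t)) t 0 := by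
    have h1 : HasDerivAt (fun a : ℝ => -a * t) (-t) 0 := by
      simpa using ((hasDerivAt_id (0:ℝ)).neg.mul_const t)
    have h2 := (Real.hasDerivAt_exp ((-(0:ℝ)) * t)).comp 0 h1
    have h3 : HasDerivAt (fun a : ℝ => Real.exp (-a * t)) (-t) 0 := by
      simpa [Function.comp_def] using h2
    simpa [Pi.sub_def] using ((hasDerivAt_const (0:ℝ) (1:ℝ)).sub h3)
  have hs := hasDerivAt_iff_tendsto_slope.mp hd
  have hs' : Filter.Tendsto (fun a : ℝ => (1 - Real.exp (-a * t)) / a)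
      (nhdsWithin 0 (Set.Ioi 0)) (nhds t) := by
    have := hs.mono_left (nhdsWithin_mono 0 (by intro x hx; exact ne_of_gt hx))
    refine this.congr ?_
    intro a
    simp [slope_def_field, Real.exp_zero]
  have := hs'.mul hs'
  refine Filter.Tendsto.congr ?_ (by simpa [pow_two] using this)
  intro a
  rw [pow_two, pow_two]
  ring

set_option maxHeartbeats 2000000 in
/-- If γ is continuous, positively homogeneous of degree 1, and for all a₁, a₂ > 0 the
function ξ ↦ (1 − e^{−a₁γ(ξ)})(1 − e^{−a₂γ(ξ)}) is a variogram, then γ(ξ) = |Aξ| for some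
positive semidefinite matrix A. -/
theorem stmt3 {d : ℕ} (γ : EuclideanSpace ℝ (Fin d) → ℝ) (hcont : Continuous γ)
    (hhom : ∀ t : ℝ, 0 ≤ t → ∀ ξ, γ (t • ξ) = t * γ ξ)
    (h : ∀ a₁ a₂ : ℝ, 0 < a₁ → 0 < a₂ →
      IsVariogram (fun ξ => (1 - Real.exp (-a₁ * γ ξ)) * (1 - Real.exp (-a₂ * γ ξ)))) :
    ∃ A : Matrix (Fin d) (Fin d) ℝ, A.PosSemidef ∧
      ∀ ξ : EuclideanSpace ℝ (Fin d),
        γ ξ = ‖(WithLp.equiv 2 (Fin d → ℝ)).symm (A.mulVec (WithLp.equiv 2 (Fin d → ℝ) ξ))‖ := by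
  classical
  have hγ0 : γ 0 = 0 := by simpa using hhom 0 le_rfl 0
  set f : ℝ → EuclideanSpace ℝ (Fin d) → ℝ := fun a ξ => (1 - Real.exp (-a * γ ξ))^2 with hf
  have hfvar : ∀ a : ℝ, 0 < a → IsVariogram (f a) := by
    intro a ha
    have h2 := h a a ha ha
    have : (fun ξ => (1 - Real.exp (-a * γ ξ)) * (1 - Real.exp (-a * γ ξ))) = f a := by
      funext ξ; simp [hf]; ring
    rwa [this] at h2
  have hf0 : ∀ a : ℝ, f a 0 = 0 := by intro a; simp [hf, hγ0]
  have hfnn : ∀ (a : ℝ) ξ, 0 ≤ f a ξ := fun a ξ => sq_nonneg _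
  -- three point inequality
  have h3 : ∀ a : ℝ, 0 < a → ∀ x y : EuclideanSpace ℝ (Fin d),
      f a (x+y) + f a (-(x+y)) ≤ 2*(f a x + f a (-x)) + 2*(f a y + f a (-y)) := by
    intro a ha x y
    have key := realCND (hfvar a ha) 3 ![0, x, x+y] ![1, -2, 1]
      (by simp [Fin.sum_univ_three]; ring)
    simp only [Fin.sum_univ_three, Matrix.cons_val_zero, Matrix.cons_val_one, Matrix.head_cons,
      Matrix.cons_val_two, Matrix.tail_cons, sub_self, sub_zero, zero_sub, hf0,
      add_sub_cancel_left, sub_add_cancel_left] at key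
    linarith [key]
  -- nonnegativity of γ
  have hγnn : ∀ ξ, 0 ≤ γ ξ := by
    by_contra hcon
    push_neg at hcon
    obtain ⟨ξ0, hξ0⟩ := hcon
    set c := -γ ξ0 with hc
    have hcpos : 0 < c := by simp [hc]; linarith
    set g : EuclideanSpace ℝ (Fin d) → ℝ := fun ξ => f 1 ξ + f 1 (-ξ) with hg
    have hgnn : ∀ ξ, 0 ≤ g ξ := fun ξ => add_nonneg (hfnn 1 ξ) (hfnn 1 (-ξ))
    have hgd : ∀ x : EuclideanSpace ℝ (Fin d), g (x + x) ≤ 4 * g x := by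
      intro x
      have h1 := h3 1 one_pos x x
      have h2 := hfnn 1 (-(x+x))
      simp only [hg]
      linarith [h1]
    have hpow : ∀ k : ℕ, g ((2^k : ℝ) • ξ0) ≤ 4^k * g ξ0 := by
      intro k
      induction k with
      | zero => simp
      | succ k ih =>
        have h2 : ((2^(k+1) : ℝ)) • ξ0 = (2^k : ℝ) • ξ0 + (2^k : ℝ) • ξ0 := by
          rw [← add_smul]; norm_num; ring_nf
        rw [h2]
        calc g ((2^k : ℝ) • ξ0 + (2^k : ℝ) • ξ0) ≤ 4 * g ((2^k:ℝ) • ξ0) := hgd _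
          _ ≤ 4 * (4^k * g ξ0) := by linarith [ih]
          _ = 4^(k+1) * g ξ0 := by ring
    have hγk : ∀ k : ℕ, γ ((2^k : ℝ) • ξ0) = -((2:ℝ)^k * c) := by
      intro k
      rw [hhom _ (by positivity)]
      simp [hc]
    obtain ⟨k, hk⟩ := pow_unbounded_of_one_lt (g ξ0 * 16 / c^4) (by norm_num : (1:ℝ) < 4)
    have hfk : ((2:ℝ)^k * c)^2/4 ≤ Real.exp ((2:ℝ)^k * c) - 1 :=
      exp_sub_one_ge _ (by positivity)
    have e1 : f 1 ((2^k:ℝ) • ξ0) = (Real.exp ((2:ℝ)^k * c) - 1)^2 := by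
      rw [hf]
      simp only []
      rw [hγk k]
      ring_nf
    have hlb : (((2:ℝ)^k * c)^2/4)^2 ≤ f 1 ((2^k:ℝ) • ξ0) := by
      rw [e1]
      have hnn : 0 ≤ ((2:ℝ)^k * c)^2/4 := by positivity
      exact pow_le_pow_left₀ hnn hfk 2
    have hub : f 1 ((2^k:ℝ) • ξ0) ≤ 4^k * g ξ0 := by
      have := hfnn 1 (-((2^k:ℝ) • ξ0))
      have h5 := hpow k
      simp only [hg] at h5 ⊢
      linarith
    have h4k : ((2:ℝ)^k)^2 = (4:ℝ)^k := by
      rw [← pow_mul, mul_comm, pow_mul]; norm_num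
    clear_value c g
    have hp : (0:ℝ) < 4^k := by positivity
    rw [div_lt_iff₀ (show (0:ℝ) < c^4 by positivity)] at hk
    have heq : (((2:ℝ)^k * c)^2/4)^2 = ((4:ℝ)^k * (4^k * c^4))/16 := by
      rw [← h4k]; ring
    have key2 : ((4:ℝ)^k * (4^k * c^4))/16 ≤ 4^k * g ξ0 :=
      calc ((4:ℝ)^k * (4^k * c^4))/16 = (((2:ℝ)^k * c)^2/4)^2 := heq.symm
        _ ≤ f 1 ((2^k:ℝ) • ξ0) := hlb
        _ ≤ 4^k * g ξ0 := hub
    have key3 : (4:ℝ)^k * c^4 / 16 ≤ g ξ0 := by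
      have := (mul_le_mul_iff_right₀ hp).mp
        (by linarith : (4:ℝ)^k * ((4^k * c^4)/16) ≤ 4^k * g ξ0)
      linarith
    linarith
  -- evenness of γ
  have hγeven : ∀ ξ, γ (-ξ) = γ ξ := by
    intro ξ
    have he := (h 1 1 one_pos one_pos).2.1 ξ
    simp only [] at he
    have hu := hγnn (-ξ)
    have hv := hγnn ξ
    have e1 : Real.exp (-1 * γ (-ξ)) ≤ 1 := Real.exp_le_one_iff.mpr (by linarith)
    have e2 : Real.exp (-1 * γ ξ) ≤ 1 := Real.exp_le_one_iff.mpr (by linarith)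
    have heq : 1 - Real.exp (-1 * γ (-ξ)) = 1 - Real.exp (-1 * γ ξ) := by
      rcases mul_self_eq_mul_self_iff.mp he with h' | h'
      · exact h'
      · linarith
    have : (-1 : ℝ) * γ (-ξ) = -1 * γ ξ := Real.exp_eq_exp.mp (by linarith)
    linarith
  -- four point inequality
  have hfeven : ∀ (a : ℝ) ξ, f a (-ξ) = f a ξ := by
    intro a ξ
    simp only [hf]
    rw [hγeven ξ]
  have h4 : ∀ a : ℝ, 0 < a → ∀ x y : EuclideanSpace ℝ (Fin d),
      f a (x + x) + f a (y + y) ≤ 2 * f a (x + y) + 2 * f a (x - y) := by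
    intro a ha x y
    have key := realCND (hfvar a ha) 4 ![x, -x, y, -y] ![1, 1, -1, -1]
      (by simp [Fin.sum_univ_four])
    simp only [Fin.sum_univ_four, Matrix.cons_val_zero, Matrix.cons_val_one, Matrix.head_cons,
      Matrix.cons_val_two, Matrix.tail_cons, Matrix.cons_val_three, sub_self, hf0,
      sub_neg_eq_add] at key
    have q1 : f a (-x - x) = f a (x + x) := by rw [show -x - x = -(x+x) by module, hfeven]
    have q2 : f a (-x + x) = 0 := by
      rw [show -x + x = (0 : EuclideanSpace ℝ (Fin d)) by module]; exact hf0 a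
    have q3 : f a (-x - y) = f a (x + y) := by rw [show -x - y = -(x+y) by module, hfeven]
    have q4 : f a (-x + y) = f a (x - y) := by rw [show -x + y = -(x-y) by module, hfeven]
    have q5 : f a (y - x) = f a (x - y) := by rw [show y - x = -(x-y) by module, hfeven]
    have q6 : f a (y + x) = f a (x + y) := by rw [show y + x = x + y by module]
    have q7 : f a (-y - x) = f a (x + y) := by rw [show -y - x = -(x+y) by module, hfeven]
    have q8 : f a (-y + x) = f a (x - y) := by rw [show -y + x = -(y - x) by module, hfeven, q5]
    have q9 : f a (-y - y) = f a (y + y) := by rw [show -y - y = -(y+y) by module, hfeven]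
    have q10 : f a (-y + y) = 0 := by
      rw [show -y + y = (0 : EuclideanSpace ℝ (Fin d)) by module]; exact hf0 a
    rw [q1, q2, q3, q4, q5, q6, q7, q8, q9, q10] at key
    linarith
  set ψ : EuclideanSpace ℝ (Fin d) → ℝ := fun ξ => (γ ξ)^2 with hψ
  have hψeven : ∀ ξ, ψ (-ξ) = ψ ξ := by intro ξ; simp [hψ, hγeven ξ]
  have hψ0 : ψ 0 = 0 := by simp [hψ, hγ0]
  have hψnn : ∀ ξ, 0 ≤ ψ ξ := fun ξ => sq_nonneg _
  have hψsmul : ∀ t : ℝ, 0 ≤ t → ∀ ξ, ψ (t • ξ) = t^2 * ψ ξ := by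
    intro t ht ξ; rw [hψ]; simp only []; rw [hhom t ht ξ]; ring
  have hψdouble : ∀ x : EuclideanSpace ℝ (Fin d), ψ (x + x) = 4 * ψ x := by
    intro x
    have : x + x = (2:ℝ) • x := by module
    rw [this, hψsmul 2 (by norm_num) x]; norm_num
  -- limit: one-sided parallelogram
  have L1 : ∀ x y : EuclideanSpace ℝ (Fin d), 4 * ψ x + 4 * ψ y ≤ 2 * ψ (x+y) + 2 * ψ (x-y) := by
    intro x y
    have t1 := lim1 (γ (x+x))
    have t2 := lim1 (γ (y+y))
    have t3 := lim1 (γ (x+y))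
    have t4 := lim1 (γ (x-y))
    have hT : Filter.Tendsto
        (fun a : ℝ => (1 - Real.exp (-a * γ (x+x)))^2/a^2 + (1 - Real.exp (-a * γ (y+y)))^2/a^2
          - 2*((1 - Real.exp (-a * γ (x+y)))^2/a^2) - 2*((1 - Real.exp (-a * γ (x-y)))^2/a^2))
        (nhdsWithin 0 (Set.Ioi 0))
        (nhds (γ (x+x)^2 + γ (y+y)^2 - 2*γ (x+y)^2 - 2*γ (x-y)^2)) :=
      ((t1.add t2).sub (t3.const_mul 2)).sub (t4.const_mul 2)
    have hev : ∀ᶠ a in nhdsWithin 0 (Set.Ioi 0),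
        (1 - Real.exp (-a * γ (x+x)))^2/a^2 + (1 - Real.exp (-a * γ (y+y)))^2/a^2
          - 2*((1 - Real.exp (-a * γ (x+y)))^2/a^2) - 2*((1 - Real.exp (-a * γ (x-y)))^2/a^2) ≤ 0 := by
      filter_upwards [self_mem_nhdsWithin] with a ha
      have hineq := h4 a ha x y
      simp only [hf] at hineq
      have ha2 : (0:ℝ) < a^2 := pow_pos ha 2
      have heq : (1 - Real.exp (-a * γ (x+x)))^2/a^2 + (1 - Real.exp (-a * γ (y+y)))^2/a^2
          - 2*((1 - Real.exp (-a * γ (x+y)))^2/a^2) - 2*((1 - Real.exp (-a * γ (x-y)))^2/a^2)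
          = ((1 - Real.exp (-a * γ (x+x)))^2 + (1 - Real.exp (-a * γ (y+y)))^2
            - 2*(1 - Real.exp (-a * γ (x+y)))^2 - 2*(1 - Real.exp (-a * γ (x-y)))^2)/a^2 := by
        ring
      rw [heq]
      apply div_nonpos_of_nonpos_of_nonneg (by linarith) (le_of_lt ha2)
    have hlim := le_of_tendsto hT hev
    have d1 : γ (x+x) = 2 * γ x := by
      rw [show x + x = (2:ℝ) • x by module, hhom 2 (by norm_num)]
    have d2 : γ (y+y) = 2 * γ y := by
      rw [show y + y = (2:ℝ) • y by module, hhom 2 (by norm_num)]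
    rw [d1, d2] at hlim
    simp only [hψ]
    nlinarith [hlim]
  -- parallelogram equality
  have P : ∀ x y : EuclideanSpace ℝ (Fin d), ψ (x+y) + ψ (x-y) = 2 * ψ x + 2 * ψ y := by
    intro x y
    have hfor : 4 * ψ x + 4 * ψ y ≤ 2 * ψ (x+y) + 2 * ψ (x-y) := L1 x y
    have hrev := L1 ((2⁻¹:ℝ) • (x+y)) ((2⁻¹:ℝ) • (x-y))
    rw [hψsmul 2⁻¹ (by norm_num) (x+y), hψsmul 2⁻¹ (by norm_num) (x-y)] at hrev
    have e1 : (2⁻¹:ℝ) • (x+y) + (2⁻¹:ℝ) • (x-y) = x := by module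
    have e2 : (2⁻¹:ℝ) • (x+y) - (2⁻¹:ℝ) • (x-y) = y := by module
    rw [e1, e2] at hrev
    nlinarith [hrev, hfor]
  -- the bilinear form
  set B : EuclideanSpace ℝ (Fin d) → EuclideanSpace ℝ (Fin d) → ℝ :=
    fun x y => (ψ (x+y) - ψ (x-y))/4 with hB
  have hBsymm : ∀ x y, B x y = B y x := by
    intro x y
    simp only [hB]
    rw [show x + y = y + x by module, show x - y = -(y-x) by module, hψeven]
  have hB0 : ∀ y, B 0 y = 0 := by
    intro y
    simp only [hB]
    rw [show (0:EuclideanSpace ℝ (Fin d)) + y = y by module,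
        show (0:EuclideanSpace ℝ (Fin d)) - y = -y by module, hψeven]
    ring
  have hBtwo : ∀ x z y, B x y + B z y = 2 * B ((2⁻¹:ℝ) • (x+z)) y := by
    intro x z y
    have e1 := P ((2⁻¹:ℝ)•(x+z) + y) ((2⁻¹:ℝ)•(x-z))
    have e2 := P ((2⁻¹:ℝ)•(x+z) - y) ((2⁻¹:ℝ)•(x-z))
    rw [show (2⁻¹:ℝ)•(x+z) + y + (2⁻¹:ℝ)•(x-z) = x + y by module,
        show (2⁻¹:ℝ)•(x+z) + y - (2⁻¹:ℝ)•(x-z) = z + y by module] at e1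
    rw [show (2⁻¹:ℝ)•(x+z) - y + (2⁻¹:ℝ)•(x-z) = x - y by module,
        show (2⁻¹:ℝ)•(x+z) - y - (2⁻¹:ℝ)•(x-z) = z - y by module] at e2
    simp only [hB]
    have e3 : B ((2⁻¹:ℝ)•(x+z)) y = (ψ ((2⁻¹:ℝ)•(x+z) + y) - ψ ((2⁻¹:ℝ)•(x+z) - y))/4 := rfl
    linarith [e1, e2]
  have hBhalf : ∀ u y, B u y = 2 * B ((2⁻¹:ℝ) • u) y := by
    intro u y
    have h2 := hBtwo u 0 y
    rw [hB0, add_zero u] at h2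
    linarith
  have hBadd : ∀ x z y, B (x + z) y = B x y + B z y := by
    intro x z y
    rw [hBtwo x z y, ← hBhalf (x+z) y]
  have hψcont : Continuous ψ := by
    rw [hψ]
    exact hcont.pow 2
  have hBcontx : ∀ y, Continuous (fun x => B x y) := by
    intro y
    simp only [hB]
    apply Continuous.div_const
    exact (hψcont.comp (continuous_id.add continuous_const)).sub
      (hψcont.comp (continuous_id.sub continuous_const))
  have hBsmul : ∀ (t : ℝ) x y, B (t • x) y = t * B x y := by
    intro t x y
    let L : EuclideanSpace ℝ (Fin d) →+ ℝ :=
      AddMonoidHom.mk' (fun x => B x y) (fun u v => hBadd u v y)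
    have hLc : Continuous L := hBcontx y
    have h2 := (L.toRealLinearMap hLc).map_smul t x
    rw [AddMonoidHom.coe_toRealLinearMap] at h2
    exact h2
  have hBsum : ∀ (y : EuclideanSpace ℝ (Fin d)) (c : Fin d → ℝ)
      (v : Fin d → EuclideanSpace ℝ (Fin d)),
      B (∑ i, c i • v i) y = ∑ i, c i * B (v i) y := by
    intro y c v
    let Ly : EuclideanSpace ℝ (Fin d) →ₗ[ℝ] ℝ :=
      { toFun := fun x => B x y
        map_add' := fun u w => hBadd u w y
        map_smul' := fun t u => by simpa using hBsmul t u y }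
    have hmap := map_sum Ly (fun i => c i • v i) Finset.univ
    have hterm : ∀ i, Ly (c i • v i) = c i * B (v i) y := by
      intro i
      rw [map_smul]
      rfl
    have hLy : ∀ u, Ly u = B u y := fun u => rfl
    rw [← hLy (∑ i, c i • v i), hmap]
    exact Finset.sum_congr rfl fun i _ => hterm i
  have hBval : ∀ ξ : EuclideanSpace ℝ (Fin d), B ξ ξ = ψ ξ := by
    intro ξ
    simp only [hB]
    rw [sub_self, hψ0, hψdouble]
    ring
  -- basis and representation
  set bas := PiLp.basisFun 2 ℝ (Fin d) with hbas
  have hrepr : ∀ ξ : EuclideanSpace ℝ (Fin d), (∑ i, ξ i • bas i) = ξ := by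
    intro ξ
    have := bas.sum_repr ξ
    simpa [hbas, PiLp.basisFun_repr] using this
  set M : Matrix (Fin d) (Fin d) ℝ := Matrix.of (fun i j => B (bas i) (bas j)) with hM
  have hψexp : ∀ ξ : EuclideanSpace ℝ (Fin d), ψ ξ = ∑ i, ∑ j, ξ i * (ξ j * M i j) := by
    intro ξ
    have e2 : ∀ i, B (bas i) ξ = ∑ j, ξ j * M i j := by
      intro i
      calc B (bas i) ξ = B ξ (bas i) := hBsymm _ _
        _ = B (∑ j, ξ j • bas j) (bas i) := by rw [hrepr ξ]
        _ = ∑ j, ξ j * B (bas j) (bas i) := hBsum (bas i) (fun j => ξ j) bas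
        _ = ∑ j, ξ j * M i j := Finset.sum_congr rfl fun j _ => by
              rw [hBsymm (bas j) (bas i)]; rfl
    calc ψ ξ = B ξ ξ := (hBval ξ).symm
      _ = B (∑ i, ξ i • bas i) ξ := by rw [hrepr ξ]
      _ = ∑ i, ξ i * B (bas i) ξ := hBsum ξ (fun i => ξ i) bas
      _ = ∑ i, ∑ j, ξ i * (ξ j * M i j) := by
          refine Finset.sum_congr rfl fun i _ => ?_
          rw [e2 i, Finset.mul_sum]
  have hMsym : ∀ i j, M i j = M j i := by
    intro i j
    simp only [hM, Matrix.of_apply]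
    exact hBsymm _ _
  have hquad : ∀ v : Fin d → ℝ, dotProduct v (M.mulVec v) =
      ψ ((WithLp.equiv 2 (Fin d → ℝ)).symm v) := by
    intro v
    rw [hψexp ((WithLp.equiv 2 (Fin d → ℝ)).symm v)]
    simp only [dotProduct, Matrix.mulVec, WithLp.equiv_symm_apply, WithLp.ofLp_toLp, Finset.mul_sum]
    refine Finset.sum_congr rfl fun i _ => Finset.sum_congr rfl fun j _ => ?_
    ring
  have hMpsd : M.PosSemidef := by
    refine Matrix.PosSemidef.of_dotProduct_mulVec_nonneg ?_ ?_
    · have hsymM : M.transpose = M := by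
        ext i j
        rw [Matrix.transpose_apply]
        exact hMsym j i
      exact (Matrix.conjTranspose_eq_transpose_of_trivial M).trans hsymM
    · intro v
      have hs : star v = v := by funext i; simp
      rw [hs, hquad]
      exact hψnn _
  obtain ⟨Asq, hAsq_psd, hAsq_mul⟩ : ∃ S : Matrix (Fin d) (Fin d) ℝ, S.PosSemidef ∧ S * S = M := by
    open scoped MatrixOrder in
    exact ⟨CFC.sqrt M, Matrix.nonneg_iff_posSemidef.mp (CFC.sqrt_nonneg M), CFC.sqrt_mul_sqrt_self M hMpsd.nonneg⟩
  refine ⟨Asq, hAsq_psd, ?_⟩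
  intro ξ
  set A := Asq with hA
  set v : Fin d → ℝ := WithLp.equiv 2 (Fin d → ℝ) ξ with hv
  have hAA : A * A = M := hAsq_mul
  have hAT : A.transpose = A :=
    (Matrix.conjTranspose_eq_transpose_of_trivial A).symm.trans hAsq_psd.1
  have hvm : A.mulVec (A.mulVec v) = Matrix.vecMul (A.mulVec v) A := by
    rw [← Matrix.vecMul_transpose, hAT]
  have hdot : dotProduct (A.mulVec v) (A.mulVec v) = dotProduct v (M.mulVec v) := by
    calc dotProduct (A.mulVec v) (A.mulVec v)
        = dotProduct (Matrix.vecMul (A.mulVec v) A) v := Matrix.dotProduct_mulVec _ A v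
      _ = dotProduct (A.mulVec (A.mulVec v)) v := by rw [hvm]
      _ = dotProduct (M.mulVec v) v := by rw [Matrix.mulVec_mulVec, hAA]
      _ = dotProduct v (M.mulVec v) := dotProduct_comm _ _
  have hvξ : (WithLp.equiv 2 (Fin d → ℝ)).symm v = ξ := by
    simp [hv]
  have hψv : dotProduct (A.mulVec v) (A.mulVec v) = ψ ξ := by
    rw [hdot, hquad, hvξ]
  have hnrm : ‖(WithLp.equiv 2 (Fin d → ℝ)).symm (A.mulVec v)‖
      = Real.sqrt (∑ i, (A.mulVec v i)^2) := by
    rw [EuclideanSpace.norm_eq]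
    congr 1
    refine Finset.sum_congr rfl fun i _ => ?_
    rw [WithLp.equiv_symm_apply, WithLp.ofLp_toLp, Real.norm_eq_abs, sq_abs]
  have hsum : (∑ i, (A.mulVec v i)^2) = ψ ξ := by
    rw [← hψv]
    simp only [dotProduct]
    exact Finset.sum_congr rfl fun i _ => pow_two (A.mulVec v i)
  rw [hnrm, hsum]
  rw [show ψ ξ = γ ξ ^ 2 from rfl, Real.sqrt_sq (hγnn ξ)]
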